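/- For positive integers u and v, the number of elements of order exactly u in the group ℤ/uℤ × ℤ/vℤ equals u · gcd(u,v) · Π_{ℓ prime, ℓ | u/gcd(u,v)} (1 − 1/ℓ) · Π_{ℓ prime, ℓ | u, ℓ ∤ u/gcd(u,v)} (1 − 1/ℓ²). -/

import Mathlib

open Finset

private lemma aux_gcd_mul {m n : ℕ} (h : Nat.Coprime m n) (k : ℕ) :
    Nat.gcd (m * n) k = Nat.gcd m k * Nat.gcd n k := by
  apply Nat.dvd_antisymm
  · have hd : Nat.gcd (m * n) k ∣ m * n := Nat.gcd_dvd_left _ _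
    have h2 := (Nat.gcd_mul_gcd_eq_iff_dvd_mul_of_coprime h (x := Nat.gcd (m * n) k)).mpr hd
    calc Nat.gcd (m * n) k = Nat.gcd (Nat.gcd (m * n) k) m * Nat.gcd (Nat.gcd (m * n) k) n :=
          h2.symm
      _ ∣ Nat.gcd m k * Nat.gcd n k := by
          apply mul_dvd_mul
          · exact Nat.dvd_gcd (Nat.gcd_dvd_right _ _)
              ((Nat.gcd_dvd_left _ _).trans (Nat.gcd_dvd_right _ _))
          · exact Nat.dvd_gcd (Nat.gcd_dvd_right _ _)
              ((Nat.gcd_dvd_left _ _).trans (Nat.gcd_dvd_right _ _))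
  · refine Nat.dvd_gcd (mul_dvd_mul (Nat.gcd_dvd_left _ _) (Nat.gcd_dvd_left _ _)) ?_
    exact Nat.Coprime.mul_dvd_of_dvd_of_dvd
      ((h.coprime_dvd_left (Nat.gcd_dvd_left m k)).coprime_dvd_right (Nat.gcd_dvd_left n k))
      (Nat.gcd_dvd_right _ _) (Nat.gcd_dvd_right _ _)

private lemma aux_torsion_card (n d : ℕ) (hn : n ≠ 0) :
    Nat.card {x : ZMod n | d • x = 0} = Nat.gcd d n := by
  haveI : NeZero n := ⟨hn⟩
  have hg : 0 < Nat.gcd d n := Nat.gcd_pos_of_pos_right d (Nat.pos_of_ne_zero hn)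
  have h1 : Nat.gcd d n * (n / Nat.gcd d n) = n := Nat.mul_div_cancel' (Nat.gcd_dvd_right d n)
  have h2 : Nat.gcd d n * (d / Nat.gcd d n) = d := Nat.mul_div_cancel' (Nat.gcd_dvd_left d n)
  have hmn : n / Nat.gcd d n ∣ n := Nat.div_dvd_of_dvd (Nat.gcd_dvd_right d n)
  have hdm : n ∣ d * (n / Nat.gcd d n) := by
    calc n = Nat.gcd d n * (n / Nat.gcd d n) := h1.symm
      _ ∣ d * (n / Nat.gcd d n) := mul_dvd_mul_right (Nat.gcd_dvd_left d n) _
  have hzero : ((d * (n / Nat.gcd d n) : ℕ) : ZMod n) = 0 :=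
    (ZMod.natCast_eq_zero_iff _ _).mpr hdm
  have hset : {x : ZMod n | d • x = 0}
      = (AddSubgroup.zmultiples ((n / Nat.gcd d n : ℕ) : ZMod n) : Set (ZMod n)) := by
    ext x
    simp only [Set.mem_setOf_eq, SetLike.mem_coe, AddSubgroup.mem_zmultiples_iff]
    constructor
    · intro hx
      have hval : ((x.val : ℕ) : ZMod n) = x := ZMod.natCast_rightInverse x
      have hx' : ((d * x.val : ℕ) : ZMod n) = 0 := by
        push_cast
        rw [hval, ← nsmul_eq_mul]
        exact hx
      have hdvd : n ∣ d * x.val := (ZMod.natCast_eq_zero_iff _ _).mp hx'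
      have hmv : n / Nat.gcd d n ∣ x.val := by
        have hco : Nat.Coprime (d / Nat.gcd d n) (n / Nat.gcd d n) :=
          Nat.coprime_div_gcd_div_gcd hg
        have hstep : Nat.gcd d n * (n / Nat.gcd d n)
            ∣ Nat.gcd d n * ((d / Nat.gcd d n) * x.val) := by
          rw [← mul_assoc, h2, h1]; exact hdvd
        have hmd : n / Nat.gcd d n ∣ (d / Nat.gcd d n) * x.val :=
          (mul_dvd_mul_iff_left hg.ne').mp hstep
        exact hco.symm.dvd_of_dvd_mul_left hmd
      obtain ⟨t, ht⟩ := hmv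
      refine ⟨(t : ℤ), ?_⟩
      rw [← hval, ht]
      push_cast
      rw [zsmul_eq_mul]
      push_cast
      ring
    · rintro ⟨t, rfl⟩
      rw [smul_comm]
      have hz : d • ((n / Nat.gcd d n : ℕ) : ZMod n) = 0 := by
        rw [nsmul_eq_mul, ← Nat.cast_mul]
        exact hzero
      rw [hz, smul_zero]
  rw [hset]
  rw [SetLike.coe_sort_coe, Nat.card_zmultiples, ZMod.addOrderOf_coe _ hn]
  rw [Nat.gcd_comm, Nat.gcd_eq_left hmn, Nat.div_div_self (Nat.gcd_dvd_right d n) hn]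

private lemma aux_prod_card (u v d : ℕ) (hu : u ≠ 0) (hv : v ≠ 0) :
    Nat.card {x : ZMod u × ZMod v | d • x = 0} = Nat.gcd d u * Nat.gcd d v := by
  rw [← aux_torsion_card u d hu, ← aux_torsion_card v d hv, ← Nat.card_prod]
  apply Nat.card_congr
  have hiff : ∀ x : ZMod u × ZMod v, d • x = 0 ↔ d • x.1 = 0 ∧ d • x.2 = 0 := by
    intro x
    rw [Prod.ext_iff]
    simp
  exact (Equiv.subtypeEquivRight hiff).trans
    (Equiv.subtypeProdEquivProd (p := fun a : ZMod u => d • a = 0)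
      (q := fun b : ZMod v => d • b = 0))

private lemma aux_gcd_pow {p : ℕ} (a v : ℕ) (hp : p.Prime) (hv : v ≠ 0) :
    Nat.gcd (p ^ a) v = p ^ min a (v.factorization p) := by
  obtain ⟨k, hk, he⟩ := (Nat.dvd_prime_pow hp).mp (Nat.gcd_dvd_left (p ^ a) v)
  have h2 : (Nat.gcd (p ^ a) v).factorization p = min a (v.factorization p) := by
    rw [Nat.factorization_gcd (pow_ne_zero a hp.ne_zero) hv, Finsupp.inf_apply,
      hp.factorization_pow, Finsupp.single_eq_same]
  rw [he, hp.factorization_pow, Finsupp.single_eq_same] at h2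
  rw [he, h2]

private lemma card_setOf_eq_filter {α : Type*} [Fintype α] (p : α → Prop) [DecidablePred p] :
    Nat.card {x | p x} = (Finset.univ.filter p).card := by
  rw [Nat.card_eq_fintype_card]
  exact Fintype.card_subtype _

private def Gfun (v : ℕ) : ArithmeticFunction ℚ :=
  ⟨fun n => (n : ℚ) * (Nat.gcd n v : ℚ), by simp⟩

private lemma Gfun_apply (v n : ℕ) : Gfun v n = (n : ℚ) * (Nat.gcd n v : ℚ) := rfl

private lemma Gfun_mult (v : ℕ) : (Gfun v).IsMultiplicative := by
  constructor
  · simp [Gfun_apply, Nat.gcd_one_left]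
  · intro m n h
    rw [Gfun_apply, Gfun_apply, Gfun_apply, aux_gcd_mul h v]
    push_cast
    ring

private def Ffun (v : ℕ) : ArithmeticFunction ℚ :=
  ((ArithmeticFunction.moebius : ArithmeticFunction ℤ) : ArithmeticFunction ℚ) * Gfun v

private lemma Ffun_def (v : ℕ) : Ffun v =
    ((ArithmeticFunction.moebius : ArithmeticFunction ℤ) : ArithmeticFunction ℚ) * Gfun v := rfl

private lemma Ffun_mult (v : ℕ) : (Ffun v).IsMultiplicative :=
  (ArithmeticFunction.isMultiplicative_moebius.intCast).mul (Gfun_mult v)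

private lemma Ffun_prime_pow {p : ℕ} (a v : ℕ) (hp : p.Prime) (ha : 1 ≤ a) :
    Ffun v (p ^ a) = (p : ℚ) ^ a * (Nat.gcd (p ^ a) v : ℚ)
      - (p : ℚ) ^ (a - 1) * (Nat.gcd (p ^ (a - 1)) v : ℚ) := by
  rw [Ffun_def, ArithmeticFunction.mul_apply,
    Nat.sum_divisorsAntidiagonal
      (fun i j => ((ArithmeticFunction.moebius : ArithmeticFunction ℤ) : ArithmeticFunction ℚ) i
        * Gfun v j),
    Nat.sum_divisors_prime_pow hp]
  have hsub : ({0, 1} : Finset ℕ) ⊆ Finset.range (a + 1) := by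
    intro i hi
    simp only [Finset.mem_insert, Finset.mem_singleton] at hi
    rcases hi with rfl | rfl <;> simp [Finset.mem_range] <;> omega
  rw [← Finset.sum_subset hsub (by
    intro i hi hni
    simp only [Finset.mem_insert, Finset.mem_singleton, not_or] at hni
    rw [ArithmeticFunction.intCoe_apply,
      ArithmeticFunction.moebius_apply_prime_pow hp hni.1]
    rw [if_neg hni.2]
    simp)]
  rw [Finset.sum_pair (by norm_num : (0 : ℕ) ≠ 1)]
  have e1 : p ^ a / p ^ 1 = p ^ (a - 1) := Nat.pow_div ha hp.pos
  simp only [pow_zero, pow_one, Nat.div_one, ArithmeticFunction.intCoe_apply,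
    ArithmeticFunction.moebius_apply_one, ArithmeticFunction.moebius_apply_prime hp]
  rw [show p ^ a / p = p ^ (a - 1) from by rw [← e1, pow_one]]
  rw [Gfun_apply, Gfun_apply]
  push_cast
  ring

theorem stmt_5 (u v : ℕ) (hu : 0 < u) (hv : 0 < v) :
    (Nat.card {x : ZMod u × ZMod v | addOrderOf x = u} : ℚ) =
      (u : ℚ) * (Nat.gcd u v : ℚ) *
        (∏ ℓ ∈ (u / Nat.gcd u v).primeFactors, (1 - 1 / (ℓ : ℚ))) *
        (∏ ℓ ∈ u.primeFactors.filter (fun ℓ => ¬ ℓ ∣ u / Nat.gcd u v),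
          (1 - 1 / (ℓ : ℚ) ^ 2)) := by
  classical
  haveI : NeZero u := ⟨hu.ne'⟩
  haveI : NeZero v := ⟨hv.ne'⟩
  have hdiv : ∀ n : ℕ, n > 0 → ∑ i ∈ n.divisors,
      ((Nat.card {x : ZMod u × ZMod v | addOrderOf x = i} : ℚ)) =
      ((Nat.gcd n u * Nat.gcd n v : ℕ) : ℚ) := by
    intro n hn
    have h1 := aux_prod_card u v n hu.ne' hv.ne'
    have h2 : (Finset.univ.filter fun x : ZMod u × ZMod v => n • x = 0).card
        = ∑ d ∈ n.divisors,
          (Finset.univ.filter fun x : ZMod u × ZMod v => addOrderOf x = d).card := by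
      have he : (Finset.univ.filter fun x : ZMod u × ZMod v => n • x = 0)
          = Finset.univ.filter fun x => addOrderOf x ∣ n := by
        apply Finset.filter_congr
        intro x _
        simp [addOrderOf_dvd_iff_nsmul_eq_zero]
      rw [he]
      rw [Finset.card_eq_sum_card_fiberwise
        (f := fun x : ZMod u × ZMod v => addOrderOf x) (t := n.divisors)
        (fun x hx => Nat.mem_divisors.mpr ⟨(Finset.mem_filter.mp hx).2, hn.ne'⟩)]
      apply Finset.sum_congr rfl
      intro d hd
      rw [Finset.filter_filter]
      congr 1
      apply Finset.filter_congr
      intro x _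
      have hdn : d ∣ n := (Nat.mem_divisors.mp hd).1
      constructor
      · exact fun h => h.2
      · intro h
        exact ⟨by simpa [h] using hdn, h⟩
    have h3 : ∀ d : ℕ, Nat.card {x : ZMod u × ZMod v | addOrderOf x = d}
        = (Finset.univ.filter fun x : ZMod u × ZMod v => addOrderOf x = d).card :=
      fun d => card_setOf_eq_filter _
    have h4 : Nat.card {x : ZMod u × ZMod v | n • x = 0}
        = (Finset.univ.filter fun x : ZMod u × ZMod v => n • x = 0).card :=
      card_setOf_eq_filter _
    simp_rw [h3]
    rw [← Nat.cast_sum]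
    exact Nat.cast_inj.mpr (by rw [← h2, ← h4]; exact h1)
  have hmob := (ArithmeticFunction.sum_eq_iff_sum_smul_moebius_eq
    (f := fun i => (Nat.card {x : ZMod u × ZMod v | addOrderOf x = i} : ℚ))
    (g := fun n => ((Nat.gcd n u * Nat.gcd n v : ℕ) : ℚ))).mp hdiv u hu
  rw [← hmob]
  have hFu : (∑ x ∈ u.divisorsAntidiagonal,
      (ArithmeticFunction.moebius x.1) • ((Nat.gcd x.2 u * Nat.gcd x.2 v : ℕ) : ℚ))
      = Ffun v u := by
    rw [Ffun_def, ArithmeticFunction.mul_apply]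
    apply Finset.sum_congr rfl
    intro x hx
    have hb : x.2 ∣ u := Dvd.intro_left x.1 (Nat.mem_divisorsAntidiagonal.mp hx).1
    rw [Nat.gcd_eq_left hb, ArithmeticFunction.intCoe_apply, Gfun_apply, zsmul_eq_mul]
    push_cast
    ring
  rw [hFu]
  rw [ArithmeticFunction.IsMultiplicative.multiplicative_factorization _ (Ffun_mult v) hu.ne']
  rw [Nat.prod_factorization_eq_prod_primeFactors]
  -- Right-hand side rewriting
  have hg0 : Nat.gcd u v ≠ 0 := (Nat.gcd_pos_of_pos_right u hv).ne'
  have hwdvd : u / Nat.gcd u v ∣ u := Nat.div_dvd_of_dvd (Nat.gcd_dvd_left u v)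
  have hw0 : u / Nat.gcd u v ≠ 0 :=
    (Nat.div_pos (Nat.le_of_dvd hu (Nat.gcd_dvd_left u v)) (Nat.pos_of_ne_zero hg0)).ne'
  have hgfac : ∀ p : ℕ, (Nat.gcd u v).factorization p
      = min (u.factorization p) (v.factorization p) := by
    intro p
    rw [Nat.factorization_gcd hu.ne' hv.ne', Finsupp.inf_apply]
  have hwfac : ∀ p : ℕ, (u / Nat.gcd u v).factorization p
      = u.factorization p - min (u.factorization p) (v.factorization p) := by
    intro p
    rw [Nat.factorization_div (Nat.gcd_dvd_left u v), Finsupp.tsub_apply, hgfac]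
  have hdvd_iff : ∀ p : ℕ, p.Prime →
      (p ∣ u / Nat.gcd u v ↔ v.factorization p < u.factorization p) := by
    intro p hp
    rw [Nat.Prime.dvd_iff_one_le_factorization hp hw0, hwfac]
    omega
  have hwpf : (u / Nat.gcd u v).primeFactors
      = u.primeFactors.filter (fun p => p ∣ u / Nat.gcd u v) := by
    ext p
    simp only [Nat.mem_primeFactors, Finset.mem_filter]
    constructor
    · rintro ⟨hp, hpd, -⟩
      exact ⟨⟨hp, hpd.trans hwdvd, hu.ne'⟩, hpd⟩
    · rintro ⟨⟨hp, -, -⟩, hpd⟩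
      exact ⟨hp, hpd, hw0⟩
  have hu2 : ((u : ℚ)) = ∏ p ∈ u.primeFactors, (p : ℚ) ^ u.factorization p := by
    conv_lhs => rw [← Nat.factorization_prod_pow_eq_self hu.ne']
    rw [Nat.prod_factorization_eq_prod_primeFactors]
    push_cast
    rfl
  have hg2 : ((Nat.gcd u v : ℚ)) = ∏ p ∈ u.primeFactors,
      (p : ℚ) ^ (min (u.factorization p) (v.factorization p)) := by
    have e1 : Nat.gcd u v = ∏ p ∈ u.primeFactors, p ^ (Nat.gcd u v).factorization p := by
      conv_lhs => rw [← Nat.factorization_prod_pow_eq_self hg0]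
      rw [Nat.prod_factorization_eq_prod_primeFactors]
      apply Finset.prod_subset (Nat.primeFactors_mono (Nat.gcd_dvd_left u v) hu.ne')
      intro p _ hp
      rw [← Nat.support_factorization] at hp
      rw [Finsupp.notMem_support_iff.mp hp, pow_zero]
    rw [e1]
    push_cast
    apply Finset.prod_congr rfl
    intro p _
    rw [hgfac]
  rw [hu2, hg2, hwpf]
  rw [Finset.prod_filter, Finset.prod_filter]
  rw [← Finset.prod_mul_distrib, ← Finset.prod_mul_distrib, ← Finset.prod_mul_distrib]
  apply Finset.prod_congr rfl
  intro p hp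
  have hp' : p.Prime := Nat.prime_of_mem_primeFactors hp
  have hap : 1 ≤ u.factorization p :=
    hp'.factorization_pos_of_dvd hu.ne' (Nat.dvd_of_mem_primeFactors hp)
  have hpne : (p : ℚ) ≠ 0 := Nat.cast_ne_zero.mpr hp'.ne_zero
  rw [Ffun_prime_pow _ v hp' hap, aux_gcd_pow _ v hp' hv.ne', aux_gcd_pow _ v hp' hv.ne']
  split_ifs with h1
  · -- p ∣ w : case c < a
    have hc : v.factorization p < u.factorization p := (hdvd_iff p hp').mp h1
    obtain ⟨b, hb⟩ : ∃ b, u.factorization p = b + 1 :=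
      ⟨u.factorization p - 1, by omega⟩
    rw [hb] at hc ⊢
    rw [min_eq_right (by omega), Nat.add_sub_cancel, min_eq_right (by omega)]
    push_cast
    field_simp
    ring
  · -- ¬ p ∣ w : case a ≤ c
    have hc : u.factorization p ≤ v.factorization p := by
      have hcc : ¬ v.factorization p < u.factorization p :=
        fun hcc => h1 ((hdvd_iff p hp').mpr hcc)
      omega
    obtain ⟨b, hb⟩ : ∃ b, u.factorization p = b + 1 :=
      ⟨u.factorization p - 1, by omega⟩
    rw [hb] at hc ⊢
    rw [min_eq_left (by omega), Nat.add_sub_cancel, min_eq_left (by omega)]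
    push_cast
    field_simp
    ring
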